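/- Every point of the A₂ cluster variety lies in one of the five cluster torus charts: if (ϑ₁,…,ϑ₅) ∈ ℂ⁵ satisfies the five pentagon relations ϑ_iϑ_{i+2} = 1 + ϑ_{i+1} (indices mod 5) and not all ϑ_i are determined trivially, then there exists an index i such that both ϑ_i ≠ 0 and ϑ_{i+1} ≠ 0. -/

import Mathlib

/-- Every point of the A₂ cluster variety lies in one of the five cluster torus
charts: if (ϑ_i) ∈ ℂ, indexed cyclically mod 5, satisfy the pentagon relations
ϑ_i ϑ_{i+2} = 1 + ϑ_{i+1}, then some pair of cyclically consecutive coordinates is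
nonzero. -/
theorem a2_cluster_charts_cover (θ : ZMod 5 → ℂ)
    (h : ∀ i : ZMod 5, θ i * θ (i + 2) = 1 + θ (i + 1)) :
    ∃ i : ZMod 5, θ i ≠ 0 ∧ θ (i + 1) ≠ 0 := by
  by_contra hc
  push_neg at hc
  have e6 : (6 : ZMod 5) = 1 := by decide
  have e5 : (5 : ZMod 5) = 0 := by decide
  have h0 := h 0
  have h1 := h 1
  have h2 := h 2
  have h4 := h 4
  norm_num at h0 h1 h2 h4
  rw [e6, e5] at h4
  by_cases z0 : θ 0 = 0
  · rw [z0] at h4; norm_num at h4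
    have n4 : θ 4 ≠ 0 := by intro e; rw [e] at h4; simp at h4
    have n1 : θ 1 ≠ 0 := by intro e; rw [e] at h4; simp at h4
    have z2 : θ 2 = 0 := by simpa [show (1 + 1 : ZMod 5) = 2 by decide] using hc 1 n1
    rw [z2] at h1; norm_num at h1
    have n3 : θ 3 ≠ 0 := by intro e; rw [e] at h1; simp at h1
    exact n4 (by simpa [show (3 + 1 : ZMod 5) = 4 by decide] using hc 3 n3)
  · have z1 : θ 1 = 0 := by simpa using hc 0 z0
    rw [z1] at h0; norm_num at h0
    have n2 : θ 2 ≠ 0 := by intro e; rw [e] at h0; simp at h0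
    have z3 : θ 3 = 0 := by simpa [show (2 + 1 : ZMod 5) = 3 by decide] using hc 2 n2
    rw [z3] at h2; norm_num at h2
    have n4 : θ 4 ≠ 0 := by intro e; rw [e] at h2; simp at h2
    exact z0 (by simpa [e5, show (4 + 1 : ZMod 5) = 0 by decide] using hc 4 n4)
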